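/- arXiv:math-ph/0303070 — 2 statements merged into one kernel-verified Lean document; each statement's English description precedes it below -/
import Mathlib

section
/- For a unit vector $\Psi$ in the antisymmetric subspace $\mathbb{H}^{(n)}$ ($\mathbb{H}$ finite-dimensional), the one-particle reduced density operator $(P_\Psi)_{:1}$ of the rank-one projector $P_\Psi$ satisfies $\|(P_\Psi)_{:1}\| \le 1/n$ in operator norm. -/
noncomputable section
open scoped BigOperators

/-- Single-particle Hilbert space: `ℂ^d`. -/
abbrev H (d : ℕ) := EuclideanSpace ℂ (Fin d)

/-- The `n`-fold tensor power of `ℂ^d`, realized concretely as `ℂ^(d^n)`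
with coordinates indexed by functions `Fin n → Fin d`. -/
abbrev TP (d n : ℕ) := EuclideanSpace ℂ (Fin n → Fin d)

/-- The simple tensor `x₁ ⊗ ⋯ ⊗ xₙ`. -/
def tp (d n : ℕ) (x : Fin n → H d) : TP d n :=
  WithLp.toLp 2 (fun j => ∏ i, x i (j i))

/-- The permutation operator `U_π`, `U_π (x₁ ⊗ ⋯ ⊗ xₙ) = x_{π⁻¹(1)} ⊗ ⋯ ⊗ x_{π⁻¹(n)}`. -/
def permOp (d n : ℕ) (π : Equiv.Perm (Fin n)) : TP d n →ₗ[ℂ] TP d n where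
  toFun ψ := WithLp.toLp 2 (fun j => ψ (j ∘ π))
  map_add' _ _ := rfl
  map_smul' _ _ := rfl

/-- The antisymmetrizer `A_n = (1/n!) ∑_π sgn(π) U_π`. -/
def antisym (d n : ℕ) : TP d n →ₗ[ℂ] TP d n :=
  ((Nat.factorial n : ℂ))⁻¹ •
    ∑ π : Equiv.Perm (Fin n), (((Equiv.Perm.sign π : ℤ) : ℂ)) • permOp d n π

/-- The one-particle partial trace of an operator `D` on the `(n+1)`-fold tensor power,
defined by its matrix elements
`⟨φ_a, D_{:1} φ_b⟩ = ∑_r ⟨φ_a ⊗ φ_r, D (φ_b ⊗ φ_r)⟩`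
over the standard orthonormal basis. -/
def ptrace1 (d n : ℕ)
    (D : TP d (n + 1) →ₗ[ℂ] TP d (n + 1)) : H d →ₗ[ℂ] H d :=
  Matrix.toEuclideanLin (Matrix.of fun a b => ∑ r : Fin n → Fin d,
    (D (EuclideanSpace.single (Fin.cons b r) (1 : ℂ))) (Fin.cons a r))

/-- The rank-one operator `P_u = |u⟩⟨u|` (orthogonal projection onto `ℂu` when `‖u‖ = 1`). -/
def projLine {E : Type*} [NormedAddCommGroup E] [InnerProductSpace ℂ E] (u : E) :
    E →ₗ[ℂ] E where
  toFun w := (inner ℂ u w : ℂ) • u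
  map_add' w₁ w₂ := by simp [inner_add_right, add_smul]
  map_smul' c w := by simp [inner_smul_right, mul_smul]

open scoped Matrix

def csgn {m : ℕ} (σ : Equiv.Perm (Fin m)) : ℂ := ((Equiv.Perm.sign σ : ℤ) : ℂ)

lemma csgn_mul {m : ℕ} (σ π : Equiv.Perm (Fin m)) : csgn (σ * π) = csgn σ * csgn π := by
  simp [csgn]

lemma csgn_sq {m : ℕ} (σ : Equiv.Perm (Fin m)) : csgn σ * csgn σ = 1 := by
  rcases Int.units_eq_one_or (Equiv.Perm.sign σ) with h | h <;> simp [csgn, h]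

lemma norm_csgn {m : ℕ} (σ : Equiv.Perm (Fin m)) : ‖csgn σ‖ = 1 := by
  rcases Int.units_eq_one_or (Equiv.Perm.sign σ) with h | h <;> simp [csgn, h]

lemma antisym_apply (d m : ℕ) (Ψ : TP d m) (j : Fin m → Fin d) :
    antisym d m Ψ j = ((m.factorial : ℂ))⁻¹ * ∑ π : Equiv.Perm (Fin m), csgn π * Ψ (j ∘ π) := by
  have : (∑ π : Equiv.Perm (Fin m), (((Equiv.Perm.sign π : ℤ) : ℂ)) • permOp d m π) Ψ j
      = ∑ π : Equiv.Perm (Fin m), csgn π * Ψ (j ∘ π) := by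
    rw [LinearMap.sum_apply, WithLp.ofLp_sum, Finset.sum_apply _ _ _]
    exact Finset.sum_congr rfl fun π _ => rfl
  simp only [antisym, LinearMap.smul_apply, PiLp.smul_apply, smul_eq_mul]
  rw [this]

lemma perm_eq {d m : ℕ} (Ψ : TP d m) (hanti : antisym d m Ψ = Ψ)
    (σ : Equiv.Perm (Fin m)) (j : Fin m → Fin d) :
    Ψ (j ∘ σ) = csgn σ * Ψ j := by
  conv_lhs => rw [← hanti]
  rw [antisym_apply]
  have h1 : ∀ π : Equiv.Perm (Fin m), (j ∘ σ) ∘ π = j ∘ (σ * π) := by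
    intro π; ext i; simp [Function.comp, Equiv.Perm.mul_apply]
  have h2 : ∑ π : Equiv.Perm (Fin m), csgn π * Ψ ((j ∘ σ) ∘ π)
      = csgn σ * ∑ π : Equiv.Perm (Fin m), csgn π * Ψ (j ∘ π) := by
    rw [Finset.mul_sum]
    rw [← Equiv.sum_comp (Equiv.mulLeft σ) (fun τ => csgn σ * (csgn τ * Ψ (j ∘ τ)))]
    refine Finset.sum_congr rfl fun π _ => ?_
    rw [h1 π]
    simp only [Equiv.coe_mulLeft]
    rw [csgn_mul, ← mul_assoc, ← mul_assoc, csgn_sq, one_mul]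
  rw [h2, ← mul_assoc, mul_comm _ (csgn σ), mul_assoc, ← antisym_apply, hanti]

lemma psi_ne_injective {d m : ℕ} (Ψ : TP d m) (hanti : antisym d m Ψ = Ψ)
    {j : Fin m → Fin d} (hj : ¬ Function.Injective j) : Ψ j = 0 := by
  rw [Function.not_injective_iff] at hj
  obtain ⟨i1, i2, he, hne⟩ := hj
  have hswap : j ∘ (Equiv.swap i1 i2) = j := by
    ext i
    rcases eq_or_ne i i1 with h|h
    · simp [h, Equiv.swap_apply_left, he]
    rcases eq_or_ne i i2 with h2|h2
    · simp [h2, Equiv.swap_apply_right, he]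
    · simp [Equiv.swap_apply_of_ne_of_ne h h2]
  have := perm_eq Ψ hanti (Equiv.swap i1 i2) j
  rw [hswap] at this
  have hs : csgn (Equiv.swap i1 i2) = -1 := by
    simp [csgn, Equiv.Perm.sign_swap hne]
  rw [hs] at this
  have : Ψ j + Ψ j = 0 := by linear_combination this
  -- Ψ j = -Ψ j
  have h2 : (2 : ℂ) * Ψ j = 0 := by ring_nf; linear_combination this
  simpa using h2

lemma colsum {d : ℕ} (b : OrthonormalBasis (Fin d) ℂ (H d)) (a a' : Fin d) :
    ∑ l, (starRingEnd ℂ) (b l a) * b l a' = if a = a' then 1 else 0 := by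
  set M : Matrix (Fin d) (Fin d) ℂ := Matrix.of (fun k x => b k x) with hM
  have horth := b.orthonormal
  rw [orthonormal_iff_ite] at horth
  have h1 : M * Mᴴ = 1 := by
    ext k l
    have := horth l k
    simp only [PiLp.inner_apply, RCLike.inner_apply] at this
    simp only [Matrix.mul_apply, Matrix.conjTranspose_apply, Matrix.one_apply, hM, Matrix.of_apply]
    simp only [RCLike.star_def]
    rw [this]
    by_cases h : k = l
    · simp [h]
    · rw [if_neg (fun hh => h hh.symm), if_neg h]
  have h2 : Mᴴ * M = 1 := mul_eq_one_comm.mp h1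
  have := congrFun (congrFun h2 a) a'
  simpa [Matrix.mul_apply, Matrix.conjTranspose_apply, Matrix.one_apply, hM] using this

lemma prod_ite_eq {d p : ℕ} (s t : Fin p → Fin d) :
    (∏ i, if s i = t i then (1:ℂ) else 0) = if s = t then 1 else 0 := by
  by_cases h : s = t
  · simp [h]
  · rw [if_neg h]
    obtain ⟨i, hi⟩ := Function.ne_iff.mp h
    exact Finset.prod_eq_zero (Finset.mem_univ i) (if_neg hi)

lemma unitary_sum {d : ℕ} (b : OrthonormalBasis (Fin d) ℂ (H d)) {p : ℕ}
    (w : (Fin p → Fin d) → ℂ) :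
    ∑ r : Fin p → Fin d, ‖∑ s, (∏ i, (starRingEnd ℂ) (b (r i) (s i))) * w s‖^2
      = ∑ s, ‖w s‖^2 := by
  set F : (Fin p → Fin d) → ℂ := fun r => ∑ s, (∏ i, (starRingEnd ℂ) (b (r i) (s i))) * w s
    with hF
  have key : ∑ r, F r * (starRingEnd ℂ) (F r) = ∑ s, w s * (starRingEnd ℂ) (w s) := by
    have hconj : ∀ r, (starRingEnd ℂ) (F r)
        = ∑ t, (∏ i, b (r i) (t i)) * (starRingEnd ℂ) (w t) := by
      intro r
      simp [F, map_sum, map_mul, map_prod]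
    calc ∑ r, F r * (starRingEnd ℂ) (F r)
        = ∑ r : Fin p → Fin d, ∑ s : Fin p → Fin d, ∑ t : Fin p → Fin d, ((∏ i, (starRingEnd ℂ) (b (r i) (s i))) * w s)
            * ((∏ i, b (r i) (t i)) * (starRingEnd ℂ) (w t)) := by
          refine Finset.sum_congr rfl fun r _ => ?_
          rw [hconj, hF, Finset.sum_mul_sum]
      _ = ∑ s : Fin p → Fin d, ∑ t : Fin p → Fin d, ∑ r : Fin p → Fin d, (w s * (starRingEnd ℂ) (w t))
            * ∏ i, ((starRingEnd ℂ) (b (r i) (s i)) * b (r i) (t i)) := by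
          rw [Finset.sum_comm]
          refine Finset.sum_congr rfl fun s _ => ?_
          rw [Finset.sum_comm]
          refine Finset.sum_congr rfl fun t _ => Finset.sum_congr rfl fun r _ => ?_
          rw [Finset.prod_mul_distrib]
          ring
      _ = ∑ s : Fin p → Fin d, ∑ t : Fin p → Fin d, (w s * (starRingEnd ℂ) (w t)) * (if s = t then 1 else 0) := by
          refine Finset.sum_congr rfl fun s _ => Finset.sum_congr rfl fun t _ => ?_
          rw [← Finset.mul_sum]
          congr 1
          have h1 : ∑ r : Fin p → Fin d, ∏ i, ((starRingEnd ℂ) (b (r i) (s i)) * b (r i) (t i))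
              = ∏ i, ∑ l, ((starRingEnd ℂ) (b l (s i)) * b l (t i)) := by
            rw [Finset.prod_univ_sum, Fintype.piFinset_univ]
          rw [h1]
          rw [show (∏ i, ∑ l, ((starRingEnd ℂ) (b l (s i)) * b l (t i)))
              = ∏ i, if s i = t i then (1:ℂ) else 0 from
            Finset.prod_congr rfl fun i _ => colsum b (s i) (t i)]
          exact prod_ite_eq s t
      _ = ∑ s, w s * (starRingEnd ℂ) (w s) := by
          refine Finset.sum_congr rfl fun s _ => ?_
          simp [mul_ite]
  have key2 : ((∑ r : Fin p → Fin d, ‖F r‖^2 : ℝ) : ℂ) = ((∑ s, ‖w s‖^2 : ℝ) : ℂ) := by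
    push_cast
    calc ∑ r : Fin p → Fin d, ((‖F r‖ : ℂ))^2
        = ∑ r : Fin p → Fin d, F r * (starRingEnd ℂ) (F r) :=
          Finset.sum_congr rfl fun r _ => (RCLike.mul_conj _).symm
      _ = ∑ s : Fin p → Fin d, w s * (starRingEnd ℂ) (w s) := key
      _ = ∑ s : Fin p → Fin d, ((‖w s‖ : ℂ))^2 :=
          Finset.sum_congr rfl fun s _ => RCLike.mul_conj _
  exact_mod_cast key2

lemma sum_split {d n : ℕ} (f : (Fin (n+1) → Fin d) → ℂ) :
    ∑ j : Fin (n+1) → Fin d, f j = ∑ a : Fin d, ∑ s : Fin n → Fin d, f (Fin.cons a s) := by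
  rw [← Equiv.sum_comp (Fin.consEquiv (fun _ => Fin d)) f, Fintype.sum_prod_type]
  rfl

lemma sum_split_real {d n : ℕ} (f : (Fin (n+1) → Fin d) → ℝ) :
    ∑ j : Fin (n+1) → Fin d, f j = ∑ a : Fin d, ∑ s : Fin n → Fin d, f (Fin.cons a s) := by
  rw [← Equiv.sum_comp (Fin.consEquiv (fun _ => Fin d)) f, Fintype.sum_prod_type]
  rfl

lemma anti_vanish {d m : ℕ} (g : (Fin m → Fin d) → ℂ)
    (hg : ∀ (σ : Equiv.Perm (Fin m)) j, g (j ∘ σ) = csgn σ * g j)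
    {j : Fin m → Fin d} (hj : ¬ Function.Injective j) : g j = 0 := by
  rw [Function.not_injective_iff] at hj
  obtain ⟨i1, i2, he, hne⟩ := hj
  have hswap : j ∘ (Equiv.swap i1 i2) = j := by
    ext i
    rcases eq_or_ne i i1 with h|h
    · simp [h, Equiv.swap_apply_left, he]
    rcases eq_or_ne i i2 with h2|h2
    · simp [h2, Equiv.swap_apply_right, he]
    · simp [Equiv.swap_apply_of_ne_of_ne h h2]
  have hthis := hg (Equiv.swap i1 i2) j
  rw [hswap] at hthis
  have hs : csgn (Equiv.swap i1 i2) = -1 := by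
    simp [csgn, Equiv.Perm.sign_swap hne]
  rw [hs] at hthis
  have h2 : (2 : ℂ) * g j = 0 := by linear_combination hthis
  simpa using h2

lemma key_bound {d n : ℕ} (Ψ : TP d (n+1)) (hΨ : ‖Ψ‖ = 1)
    (hanti : antisym d (n+1) Ψ = Ψ) (u : H d) (hu : ‖u‖ = 1) :
    ∑ r : Fin n → Fin d, ‖∑ a, (starRingEnd ℂ) (u a) * Ψ (Fin.cons a r)‖^2 ≤ 1/(n+1) := by
  classical
  -- d is positive
  rcases Nat.eq_zero_or_pos d with hd0 | hd
  · subst hd0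
    simp [EuclideanSpace.norm_eq] at hu
  set i0 : Fin d := ⟨0, hd⟩ with hi0
  -- orthonormal basis extending u
  obtain ⟨b, hb⟩ : ∃ b : OrthonormalBasis (Fin d) ℂ (H d), ∀ i ∈ ({i0} : Set (Fin d)),
      b i = (fun _ : Fin d => u) i := by
    apply Orthonormal.exists_orthonormalBasis_extension_of_card_eq
    · simp
    · constructor
      · intro i; simpa using hu
      · intro i j hij
        exfalso
        apply hij
        have h1 : i.1 = i0 := i.2
        have h2 : j.1 = i0 := j.2
        exact Subtype.ext (h1.trans h2.symm)
  have hb0 : b i0 = u := hb i0 rfl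
  set Φ : (Fin (n+1) → Fin d) → ℂ :=
    fun j => ∑ k : Fin (n+1) → Fin d, (∏ i, (starRingEnd ℂ) (b (j i) (k i))) * Ψ k with hΦ
  set Z : (Fin n → Fin d) → ℂ :=
    fun s => ∑ a, (starRingEnd ℂ) (u a) * Ψ (Fin.cons a s) with hZ
  -- Parseval at level n+1
  have hnorm1 : ∑ k : Fin (n+1) → Fin d, ‖Ψ k‖^2 = 1 := by
    have := EuclideanSpace.norm_eq Ψ
    rw [hΨ] at this
    exact Real.sqrt_eq_one.mp this.symm
  have hΦnorm : ∑ j : Fin (n+1) → Fin d, ‖Φ j‖^2 = 1 := by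
    rw [hΦ]
    simpa using (unitary_sum b (fun k => Ψ k)).trans hnorm1
  -- antisymmetry of Φ
  have hΦanti : ∀ (σ : Equiv.Perm (Fin (n+1))) j, Φ (j ∘ σ) = csgn σ * Φ j := by
    intro σ j
    have step1 : Φ (j ∘ σ) = ∑ k : Fin (n+1) → Fin d,
        (∏ i, (starRingEnd ℂ) (b (j (σ i)) (k (σ i)))) * Ψ (k ∘ σ) := by
      rw [hΦ]
      exact (Equiv.sum_comp (Equiv.arrowCongr σ.symm (Equiv.refl (Fin d)))
        (fun k => (∏ i, (starRingEnd ℂ) (b ((j ∘ σ) i) (k i))) * Ψ k)).symm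
    rw [step1, hΦ, Finset.mul_sum]
    refine Finset.sum_congr rfl fun k _ => ?_
    rw [Equiv.prod_comp σ (fun i => (starRingEnd ℂ) (b (j i) (k i))),
      perm_eq Ψ hanti σ k]
    ring
  -- Φ vanishes on non-injective indices
  have hΦ0 : ∀ j : Fin (n+1) → Fin d, ¬ Function.Injective j → Φ j = 0 :=
    fun j hj => anti_vanish Φ hΦanti hj
  -- Φ on cons i0 is unitary image of Z
  have hcons : ∀ r : Fin n → Fin d,
      Φ (Fin.cons i0 r) = ∑ s, (∏ i, (starRingEnd ℂ) (b (r i) (s i))) * Z s := by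
    intro r
    calc Φ (Fin.cons i0 r)
        = ∑ a : Fin d, ∑ s : Fin n → Fin d,
            (∏ i, (starRingEnd ℂ) (b ((Fin.cons i0 r : Fin (n+1) → Fin d) i)
              ((Fin.cons a s : Fin (n+1) → Fin d) i))) * Ψ (Fin.cons a s) :=
          sum_split (fun k => (∏ i, (starRingEnd ℂ)
            (b ((Fin.cons i0 r : Fin (n+1) → Fin d) i) (k i))) * Ψ k)
      _ = ∑ s : Fin n → Fin d, (∏ i, (starRingEnd ℂ) (b (r i) (s i))) * Z s := ?_
    rw [Finset.sum_comm]
    refine Finset.sum_congr rfl fun s _ => ?_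
    rw [hZ, Finset.mul_sum]
    refine Finset.sum_congr rfl fun a _ => ?_
    rw [Fin.prod_univ_succ]
    simp [hb0]
    have e1 : (Fin.cons a s : Fin (n+1) → Fin d) 0 = a := rfl
    have e2 : ∀ x : Fin n, (Fin.cons a s : Fin (n+1) → Fin d) x.succ = s x := fun _ => rfl
    ring
  have hZnorm : ∑ r : Fin n → Fin d, ‖Φ (Fin.cons i0 r)‖^2 = ∑ s, ‖Z s‖^2 := by
    calc ∑ r : Fin n → Fin d, ‖Φ (Fin.cons i0 r)‖^2
        = ∑ r : Fin n → Fin d, ‖∑ s, (∏ i, (starRingEnd ℂ) (b (r i) (s i))) * Z s‖^2 :=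
          Finset.sum_congr rfl fun r _ => by rw [hcons]
      _ = ∑ s, ‖Z s‖^2 := unitary_sum b Z
  -- counting argument
  set S : Fin (n+1) → ℝ :=
    fun i => ∑ j : Fin (n+1) → Fin d, if j i = i0 then ‖Φ j‖^2 else 0 with hS
  have hS0 : S 0 = ∑ r : Fin n → Fin d, ‖Φ (Fin.cons i0 r)‖^2 := by
    show (∑ j : Fin (n+1) → Fin d, if j 0 = i0 then ‖Φ j‖^2 else 0)
        = ∑ r : Fin n → Fin d, ‖Φ (Fin.cons i0 r)‖^2
    rw [sum_split_real (fun j => if j 0 = i0 then ‖Φ j‖^2 else 0)]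
    rw [Finset.sum_comm]
    refine Finset.sum_congr rfl fun s _ => ?_
    simp [Fin.cons_zero]
  have hSi : ∀ i : Fin (n+1), S i = S 0 := by
    intro i
    have := Equiv.sum_comp (Equiv.arrowCongr (Equiv.swap (0 : Fin (n+1)) i) (Equiv.refl (Fin d)))
      (fun j => if j 0 = i0 then ‖Φ j‖^2 else 0)
    show (∑ j : Fin (n+1) → Fin d, if j i = i0 then ‖Φ j‖^2 else 0)
        = ∑ j : Fin (n+1) → Fin d, if j 0 = i0 then ‖Φ j‖^2 else 0
    rw [← this]
    refine Finset.sum_congr rfl fun j _ => ?_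
    have he : (Equiv.arrowCongr (Equiv.swap (0 : Fin (n+1)) i) (Equiv.refl (Fin d))) j
        = j ∘ (Equiv.swap (0 : Fin (n+1)) i) := by
      ext x
      simp [Equiv.arrowCongr, Equiv.symm_swap]
    rw [he]
    have hval : (j ∘ (Equiv.swap (0 : Fin (n+1)) i)) 0 = j i := by
      simp [Equiv.swap_apply_left]
    have hn : ‖Φ (j ∘ (Equiv.swap (0 : Fin (n+1)) i))‖ = ‖Φ j‖ := by
      rw [hΦanti, norm_mul, norm_csgn, one_mul]
    rw [hval, hn]
  have hsum : ∑ i : Fin (n+1), S i = (n+1) * S 0 := by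
    rw [Finset.sum_congr rfl fun i _ => hSi i, Finset.sum_const]
    simp [mul_comm]
  have hbound : ∑ i : Fin (n+1), S i ≤ ∑ j : Fin (n+1) → Fin d, ‖Φ j‖^2 := by
    show (∑ i : Fin (n+1), ∑ j : Fin (n+1) → Fin d, if j i = i0 then ‖Φ j‖^2 else 0)
        ≤ ∑ j : Fin (n+1) → Fin d, ‖Φ j‖^2
    rw [Finset.sum_comm]
    refine Finset.sum_le_sum fun j _ => ?_
    by_cases hz : Φ j = 0
    · simp [hz]
    · have hinj : Function.Injective j := by
        by_contra hni
        exact hz (hΦ0 j hni)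
      rw [← Finset.sum_filter]
      rcases Finset.eq_empty_or_nonempty (Finset.univ.filter (fun i => j i = i0)) with he | he
      · rw [he, Finset.sum_empty]
        positivity
      · have hcard : (Finset.univ.filter (fun i => j i = i0)).card ≤ 1 := by
          apply Finset.card_le_one.mpr
          intro x hx y hy
          simp only [Finset.mem_filter] at hx hy
          exact hinj (hx.2.trans hy.2.symm)
        rw [Finset.sum_const, nsmul_eq_mul]
        calc ((Finset.univ.filter (fun i => j i = i0)).card : ℝ) * ‖Φ j‖^2
            ≤ 1 * ‖Φ j‖^2 := by
              apply mul_le_mul_of_nonneg_right _ (sq_nonneg _)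
              exact_mod_cast hcard
          _ = ‖Φ j‖^2 := one_mul _
  -- conclude
  have hfin : (n+1 : ℝ) * S 0 ≤ 1 := by
    rw [← hsum, ← hΦnorm]
    exact hbound
  have hpos : (0:ℝ) < n+1 := by positivity
  have : S 0 ≤ 1/(n+1) := by
    rw [le_div_iff₀ hpos, mul_comm]
    exact hfin
  calc ∑ r : Fin n → Fin d, ‖∑ a, (starRingEnd ℂ) (u a) * Ψ (Fin.cons a r)‖^2
      = ∑ s, ‖Z s‖^2 := rfl
    _ = S 0 := by rw [hS0, hZnorm]
    _ ≤ 1/(n+1) := this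

lemma ptrace1_apply {d n : ℕ} (Ψ : TP d (n+1)) (y : H d) (a : Fin d) :
    (ptrace1 d n (projLine Ψ)) y a
      = ∑ c, (∑ r : Fin n → Fin d,
          (starRingEnd ℂ) (Ψ (Fin.cons c r)) * Ψ (Fin.cons a r)) * y c := by
  have this1 : ∀ (c : Fin d) (r : Fin n → Fin d),
      (projLine Ψ (EuclideanSpace.single (Fin.cons c r) (1 : ℂ))) (Fin.cons a r)
        = (starRingEnd ℂ) (Ψ (Fin.cons c r)) * Ψ (Fin.cons a r) := by
    intro c r
    simp only [projLine, LinearMap.coe_mk, AddHom.coe_mk]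
    rw [EuclideanSpace.inner_single_right]
    simp only [PiLp.smul_apply, smul_eq_mul, one_mul]
  have hmv : (ptrace1 d n (projLine Ψ)) y a
      = ∑ c, (Matrix.of fun a b => ∑ r : Fin n → Fin d,
          (projLine Ψ (EuclideanSpace.single (Fin.cons b r) (1 : ℂ))) (Fin.cons a r)) a c
        * y c := rfl
  rw [hmv]
  refine Finset.sum_congr rfl fun c _ => ?_
  congr 1
  exact Finset.sum_congr rfl fun r _ => this1 c r

def Zf {d n : ℕ} (Ψ : TP d (n+1)) (x : H d) : TP d n :=
  WithLp.toLp 2 (fun r => ∑ a, (starRingEnd ℂ) (x a) * Ψ (Fin.cons a r))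

lemma G {d n : ℕ} (Ψ : TP d (n+1)) (x y : H d) :
    (inner ℂ x ((ptrace1 d n (projLine Ψ)) y) : ℂ) = inner ℂ (Zf Ψ y) (Zf Ψ x) := by
  simp only [PiLp.inner_apply, RCLike.inner_apply']
  have hZ : ∀ (w : H d) (r : Fin n → Fin d),
      Zf Ψ w r = ∑ a, (starRingEnd ℂ) (w a) * Ψ (Fin.cons a r) := fun _ _ => rfl
  calc ∑ a, (starRingEnd ℂ) (x a) * (ptrace1 d n (projLine Ψ)) y a
      = ∑ a, ∑ r : Fin n → Fin d, ∑ c,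
          (y c * (starRingEnd ℂ) (Ψ (Fin.cons c r)))
            * ((starRingEnd ℂ) (x a) * Ψ (Fin.cons a r)) := by
        refine Finset.sum_congr rfl fun a _ => ?_
        rw [ptrace1_apply, Finset.mul_sum]
        refine (Finset.sum_congr rfl fun c _ => ?_).trans Finset.sum_comm
        rw [Finset.sum_mul, Finset.mul_sum]
        exact Finset.sum_congr rfl fun r _ => by ring
    _ = ∑ r : Fin n → Fin d, ∑ a, ∑ c,
          (y c * (starRingEnd ℂ) (Ψ (Fin.cons c r)))
            * ((starRingEnd ℂ) (x a) * Ψ (Fin.cons a r)) := Finset.sum_comm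
    _ = ∑ r : Fin n → Fin d, (starRingEnd ℂ) (Zf Ψ y r) * Zf Ψ x r := by
        refine Finset.sum_congr rfl fun r _ => ?_
        rw [hZ, hZ, map_sum, Finset.sum_mul_sum]
        simp only [map_mul, RingHomCompTriple.comp_apply, RingHom.id_apply, Complex.conj_conj]
        rw [Finset.sum_comm]

lemma quad_bound {d n : ℕ} (Ψ : TP d (n+1)) (hΨ : ‖Ψ‖ = 1)
    (hanti : antisym d (n+1) Ψ = Ψ) (x : H d) :
    ‖Zf Ψ x‖^2 ≤ (1/(n+1 : ℝ)) * ‖x‖^2 := by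
  have hnormsq : ∀ v : TP d n, ‖v‖^2 = ∑ r, ‖v r‖^2 := by
    intro v
    rw [EuclideanSpace.norm_eq, Real.sq_sqrt (Finset.sum_nonneg fun r _ => sq_nonneg _)]
  by_cases hx : x = 0
  · have hz : Zf Ψ x = 0 := by
      ext r
      simp [Zf, hx]
    rw [hz, hx]
    simp
  · set c : ℝ := ‖x‖ with hc
    have hc0 : c ≠ 0 := norm_ne_zero_iff.mpr hx
    have hcpos : 0 < c := norm_pos_iff.mpr hx
    set u : H d := ((c : ℂ))⁻¹ • x with hu
    have hu1 : ‖u‖ = 1 := by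
      rw [hu]
      rw [norm_smul]
      simp [hc0, abs_of_nonneg (norm_nonneg x)]
      rw [abs_of_pos hcpos, ← hc, inv_mul_cancel₀ hc0]
    have hZu : ∀ r, Zf Ψ u r = ((c : ℂ))⁻¹ * Zf Ψ x r := by
      intro r
      show (∑ a, (starRingEnd ℂ) (u a) * Ψ (Fin.cons a r))
          = ((c : ℂ))⁻¹ * ∑ a, (starRingEnd ℂ) (x a) * Ψ (Fin.cons a r)
      rw [Finset.mul_sum]
      refine Finset.sum_congr rfl fun a _ => ?_
      have : u a = ((c : ℂ))⁻¹ * x a := rfl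
      rw [this, map_mul, map_inv₀, Complex.conj_ofReal]
      ring
    have hkey := key_bound Ψ hΨ hanti u hu1
    have heq : ∀ r : Fin n → Fin d,
        ‖∑ a, (starRingEnd ℂ) (u a) * Ψ (Fin.cons a r)‖^2 = c⁻¹^2 * ‖Zf Ψ x r‖^2 := by
      intro r
      have : (∑ a, (starRingEnd ℂ) (u a) * Ψ (Fin.cons a r)) = Zf Ψ u r := rfl
      rw [this, hZu r, norm_mul, mul_pow]
      congr 2
      rw [norm_inv, Complex.norm_real, Real.norm_eq_abs, abs_of_nonneg (norm_nonneg x)]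
    rw [Finset.sum_congr rfl (fun r _ => heq r), ← Finset.mul_sum] at hkey
    have hsum : ∑ r, ‖Zf Ψ x r‖^2 ≤ c^2 * (1/(n+1 : ℝ)) := by
      have h2 : c⁻¹^2 * ∑ r, ‖Zf Ψ x r‖^2 ≤ 1/(n+1 : ℝ) := hkey
      calc ∑ r, ‖Zf Ψ x r‖^2 = c^2 * (c⁻¹^2 * ∑ r, ‖Zf Ψ x r‖^2) := by
            field_simp
        _ ≤ c^2 * (1/(n+1 : ℝ)) := by
            apply mul_le_mul_of_nonneg_left h2 (sq_nonneg c)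
    rw [hnormsq]
    calc ∑ r, ‖Zf Ψ x r‖^2 ≤ c^2 * (1/(n+1 : ℝ)) := hsum
      _ = (1/(n+1 : ℝ)) * ‖x‖^2 := by rw [hc]; ring

/-- For a unit vector `Ψ` in the antisymmetric subspace of `ℍ^{⊗(n+1)}`, the one-particle
reduced density operator of the rank-one projector `P_Ψ` satisfies
`‖(P_Ψ)_{:1}‖ ≤ 1/(n+1)` in operator norm. -/
theorem stmt8 (d n : ℕ) (Ψ : TP d (n + 1)) (hΨ : ‖Ψ‖ = 1)
    (hanti : antisym d (n + 1) Ψ = Ψ) :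
    ‖LinearMap.toContinuousLinearMap (ptrace1 d n (projLine Ψ))‖ ≤ 1 / (n + 1) := by
  set T := ptrace1 d n (projLine Ψ) with hT
  set C : ℝ := 1/(n+1 : ℝ) with hC
  have hCpos : 0 < C := by positivity
  refine ContinuousLinearMap.opNorm_le_bound _ (le_of_lt hCpos) fun u => ?_
  have hTu : LinearMap.toContinuousLinearMap T u = T u := rfl
  rw [hTu]
  -- key inequalities
  have h1 : ‖T u‖^2 ≤ ‖Zf Ψ u‖ * ‖Zf Ψ (T u)‖ := by
    have hin : (inner ℂ (T u) (T u) : ℂ) = inner ℂ (Zf Ψ u) (Zf Ψ (T u)) := G Ψ (T u) u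
    have hself : (inner ℂ (T u) (T u) : ℂ) = ((‖T u‖ : ℂ))^2 := by
      rw [inner_self_eq_norm_sq_to_K]
      norm_cast
    have : ((‖T u‖ : ℂ))^2 = inner ℂ (Zf Ψ u) (Zf Ψ (T u)) := by rw [← hself, hin]
    have hnorm := congrArg norm this
    rw [norm_pow, Complex.norm_real, Real.norm_eq_abs, abs_of_nonneg (norm_nonneg _)] at hnorm
    rw [hnorm]
    exact norm_inner_le_norm _ _
  have h2 : ‖Zf Ψ u‖^2 ≤ C * ‖u‖^2 := quad_bound Ψ hΨ hanti u
  have h3 : ‖Zf Ψ (T u)‖^2 ≤ C * ‖T u‖^2 := quad_bound Ψ hΨ hanti (T u)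
  -- combine
  have hprod : ‖Zf Ψ u‖ * ‖Zf Ψ (T u)‖ ≤ C * ‖u‖ * ‖T u‖ := by
    have hsq : (‖Zf Ψ u‖ * ‖Zf Ψ (T u)‖)^2 ≤ (C * ‖u‖ * ‖T u‖)^2 := by
      have := mul_le_mul h2 h3 (sq_nonneg _) (by positivity)
      calc (‖Zf Ψ u‖ * ‖Zf Ψ (T u)‖)^2 = ‖Zf Ψ u‖^2 * ‖Zf Ψ (T u)‖^2 := by ring
        _ ≤ (C * ‖u‖^2) * (C * ‖T u‖^2) := this
        _ = (C * ‖u‖ * ‖T u‖)^2 := by ring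
    have h5 := Real.sqrt_le_sqrt hsq
    rwa [Real.sqrt_sq (by positivity), Real.sqrt_sq (by positivity)] at h5
  have h6 : ‖T u‖^2 ≤ C * ‖u‖ * ‖T u‖ := le_trans h1 hprod
  rcases eq_or_lt_of_le (norm_nonneg (T u)) with ht | ht
  · rw [← ht]
    positivity
  · have := le_of_mul_le_mul_right (by nlinarith [h6] : ‖T u‖ * ‖T u‖ ≤ (C * ‖u‖) * ‖T u‖) ht
    calc ‖T u‖ ≤ C * ‖u‖ := this
      _ = 1/(n+1 : ℝ) * ‖u‖ := by rw [hC]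
end
end

section
/- Let $T$ be a Hermitian operator on a finite-dimensional Hilbert space with trace norm $\|T\|_1$. Then the trace norm of $T^{\otimes n} n! A_n$ on $\mathbb{H}^{\otimes n}$ satisfies $\|T^{\otimes n} n! A_n\|_1 \le \|T\|_1^n$. -/
noncomputable section
open scoped BigOperators ComplexOrder

/-- The trace norm `‖M‖₁ = Tr √(Mᴴ M)` of a complex matrix. -/
def traceNorm {m : Type*} [Fintype m] [DecidableEq m] (M : Matrix m m ℂ) : ℝ :=
  ((Matrix.posSemidef_conjTranspose_mul_self M).1.eigenvectorUnitary.1 *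
    Matrix.diagonal (((↑) : ℝ → ℂ) ∘ Real.sqrt ∘ (Matrix.posSemidef_conjTranspose_mul_self M).1.eigenvalues) *
    (star (Matrix.posSemidef_conjTranspose_mul_self M).1.eigenvectorUnitary :
      Matrix m m ℂ)).trace.re

/-- The matrix of the permutation operator `U_π` on `ℍ^{⊗n}` in the standard basis. -/
def permMat (d n : ℕ) (π : Equiv.Perm (Fin n)) :
    Matrix (Fin n → Fin d) (Fin n → Fin d) ℂ :=
  Matrix.of fun j k => if k = j ∘ π then 1 else 0

/-- The matrix of the antisymmetrizer `Aₙ = (1/n!) ∑_π sgn(π) U_π`. -/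
def antisymMat (d n : ℕ) : Matrix (Fin n → Fin d) (Fin n → Fin d) ℂ :=
  ((Nat.factorial n : ℂ))⁻¹ •
    ∑ π : Equiv.Perm (Fin n), (((Equiv.Perm.sign π : ℤ) : ℂ)) • permMat d n π

/-- The matrix of the `n`-fold tensor power `T^{⊗n}` of an operator `T` on `ℂ^d`. -/
def tensorPowMat (d n : ℕ) (T : Matrix (Fin d) (Fin d) ℂ) :
    Matrix (Fin n → Fin d) (Fin n → Fin d) ℂ :=
  Matrix.of fun j k => ∏ i, T (j i) (k i)

namespace Stmt10Aux
open Matrix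

/-- The unnormalized antisymmetrizer `∑_π sgn(π) U_π`. -/
def permSum (d n : ℕ) : Matrix (Fin n → Fin d) (Fin n → Fin d) ℂ :=
  ∑ π : Equiv.Perm (Fin n), (((Equiv.Perm.sign π : ℤ) : ℂ)) • permMat d n π

variable (d n : ℕ)

lemma factorial_smul_antisym :
    (Nat.factorial n : ℂ) • antisymMat d n = permSum d n := by
  unfold antisymMat permSum
  rw [smul_smul, mul_inv_cancel₀ (by exact_mod_cast n.factorial_ne_zero), one_smul]

lemma tensorPow_mul (A B : Matrix (Fin d) (Fin d) ℂ) :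
    tensorPowMat d n (A * B) = tensorPowMat d n A * tensorPowMat d n B := by
  ext j k
  simp only [tensorPowMat, Matrix.mul_apply, Matrix.of_apply]
  rw [Finset.prod_univ_sum]
  simp [Fintype.piFinset_univ, Finset.prod_mul_distrib]

lemma tensorPow_one : tensorPowMat d n (1 : Matrix (Fin d) (Fin d) ℂ) = 1 := by
  ext j k
  simp only [tensorPowMat, Matrix.of_apply, Matrix.one_apply]
  rw [Finset.prod_boole]
  simp [funext_iff]

lemma tensorPow_conjTranspose (A : Matrix (Fin d) (Fin d) ℂ) :
    tensorPowMat d n Aᴴ = (tensorPowMat d n A)ᴴ := by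
  ext j k
  simp [tensorPowMat, Matrix.conjTranspose_apply]

lemma permMat_mul_tensorPow (A : Matrix (Fin d) (Fin d) ℂ) (π : Equiv.Perm (Fin n)) :
    permMat d n π * tensorPowMat d n A = tensorPowMat d n A * permMat d n π := by
  ext j k
  simp only [Matrix.mul_apply, permMat, tensorPowMat, Matrix.of_apply]
  rw [Finset.sum_eq_single (j ∘ π)
    (by intro b _ hb; rw [if_neg hb, zero_mul]) (by simp)]
  rw [if_pos rfl, one_mul]
  rw [Finset.sum_eq_single (fun i => k (π⁻¹ i))]
  · rw [if_pos (by ext i; simp), mul_one]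
    calc ∏ i, A ((j ∘ π) i) (k i) = ∏ i, A (j (π i)) (k (π⁻¹ (π i))) := by
          apply Finset.prod_congr rfl; intro i _; simp
      _ = ∏ i, A (j i) (k (π⁻¹ i)) := Equiv.prod_comp π (fun i => A (j i) (k (π⁻¹ i)))
  · intro b _ hb
    rw [if_neg, mul_zero]
    intro h
    apply hb
    ext i
    have := congrFun h (π⁻¹ i)
    simp at this
    simp [this]
  · simp

lemma permMat_mul (π σ : Equiv.Perm (Fin n)) :
    permMat d n π * permMat d n σ = permMat d n (π * σ) := by
  ext j k
  simp only [Matrix.mul_apply, permMat, Matrix.of_apply]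
  rw [Finset.sum_eq_single (j ∘ π) (by intro b _ hb; rw [if_neg hb, zero_mul]) (by simp)]
  rw [if_pos rfl, one_mul]
  congr 1

lemma permMat_conjTranspose (π : Equiv.Perm (Fin n)) :
    (permMat d n π)ᴴ = permMat d n π⁻¹ := by
  ext j k
  simp only [Matrix.conjTranspose_apply, permMat, Matrix.of_apply]
  have : (j = k ∘ π) ↔ (k = j ∘ ⇑π⁻¹) := by
    constructor
    · intro h; ext i; rw [h]; simp
    · intro h; ext i; rw [h]; simp
  by_cases h : j = k ∘ π
  · rw [if_pos h, if_pos (this.mp h)]; simp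
  · rw [if_neg h, if_neg (fun hh => h (this.mpr hh))]; simp

lemma sign_cast_mul (π σ : Equiv.Perm (Fin n)) :
    (((Equiv.Perm.sign π : ℤ) : ℂ)) * (((Equiv.Perm.sign σ : ℤ) : ℂ))
      = (((Equiv.Perm.sign (π * σ) : ℤ) : ℂ)) := by
  rw [Equiv.Perm.sign_mul]
  push_cast
  ring

lemma permSum_conjTranspose : (permSum d n)ᴴ = permSum d n := by
  unfold permSum
  rw [Matrix.conjTranspose_sum]
  rw [← Equiv.sum_comp (Equiv.inv (Equiv.Perm (Fin n)))
    (fun π => (((Equiv.Perm.sign π : ℤ) : ℂ)) • permMat d n π)]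
  apply Finset.sum_congr rfl
  intro π _
  simp only [Equiv.inv_apply, Matrix.conjTranspose_smul, permMat_conjTranspose]
  congr 1
  · simp [Equiv.Perm.sign_inv]

lemma permSum_mul_self : permSum d n * permSum d n = (n.factorial : ℂ) • permSum d n := by
  unfold permSum
  rw [Finset.sum_mul_sum]
  have h1 : ∀ π : Equiv.Perm (Fin n),
      (∑ σ : Equiv.Perm (Fin n), ((((Equiv.Perm.sign π : ℤ) : ℂ)) • permMat d n π) *
        ((((Equiv.Perm.sign σ : ℤ) : ℂ)) • permMat d n σ))
      = ∑ ρ : Equiv.Perm (Fin n), (((Equiv.Perm.sign ρ : ℤ) : ℂ)) • permMat d n ρ := by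
    intro π
    rw [← Equiv.sum_comp (Equiv.mulLeft π)
      (fun ρ => (((Equiv.Perm.sign ρ : ℤ) : ℂ)) • permMat d n ρ)]
    apply Finset.sum_congr rfl
    intro σ _
    simp only [Equiv.coe_mulLeft]
    rw [smul_mul_smul_comm, permMat_mul, sign_cast_mul]
  rw [Finset.sum_congr rfl (fun π _ => h1 π)]
  rw [Finset.sum_const, Finset.card_univ, Fintype.card_perm, Fintype.card_fin]
  rw [← Nat.cast_smul_eq_nsmul ℂ]

lemma permSum_mul_tensorPow (A : Matrix (Fin d) (Fin d) ℂ) :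
    permSum d n * tensorPowMat d n A = tensorPowMat d n A * permSum d n := by
  unfold permSum
  rw [Finset.sum_mul, Finset.mul_sum]
  apply Finset.sum_congr rfl
  intro π _
  rw [smul_mul_assoc, mul_smul_comm, permMat_mul_tensorPow]

lemma posSemidef_real_smul {m : Type*} [Fintype m] {M : Matrix m m ℂ}
    (hM : M.PosSemidef) {c : ℝ} (hc : 0 ≤ c) : (((c : ℂ)) • M).PosSemidef := by
  constructor
  · unfold Matrix.IsHermitian
    rw [Matrix.conjTranspose_smul, hM.1.eq]
    congr 1
    simp [RingHom.id_apply]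
  · intro x
    have := mul_nonneg (show (0 : ℂ) ≤ (c : ℂ) by exact_mod_cast hc) (hM.2 x)
    convert this using 1
    simp only [Finsupp.sum, Finset.mul_sum, Matrix.smul_apply, smul_eq_mul]
    refine Finset.sum_congr rfl fun i _ => Finset.sum_congr rfl fun j _ => ?_
    ring

lemma permSum_posSemidef : (permSum d n).PosSemidef := by
  have key : permSum d n
      = (((n.factorial : ℝ)⁻¹ : ℝ) : ℂ) • ((permSum d n)ᴴ * permSum d n) := by
    rw [permSum_conjTranspose, permSum_mul_self, smul_smul]
    push_cast
    rw [inv_mul_cancel₀ (by exact_mod_cast n.factorial_ne_zero), one_smul]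
  rw [key]
  exact posSemidef_real_smul (Matrix.posSemidef_conjTranspose_mul_self _)
    (inv_nonneg.mpr (by positivity))

lemma sign_sum_stab (j : Fin n → Fin d) :
    (∑ π : Equiv.Perm (Fin n),
        ((Equiv.Perm.sign π : ℤ) : ℂ) * (if j = j ∘ π then 1 else 0))
      = if Function.Injective j then 1 else 0 := by
  by_cases hj : Function.Injective j
  · rw [if_pos hj]
    rw [Finset.sum_eq_single (1 : Equiv.Perm (Fin n))]
    · simp
    · intro π _ hπ
      rw [if_neg, mul_zero]
      intro h
      apply hπ
      apply Equiv.ext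
      intro i
      have := congrFun h i
      simp only [Function.comp_apply] at this
      rw [Equiv.Perm.one_apply]
      exact (hj this.symm)
    · simp
  · rw [if_neg hj]
    rw [Function.not_injective_iff] at hj
    obtain ⟨x, y, hxy, hne⟩ := hj
    set τ := Equiv.swap x y with hτ
    have hjτ : j ∘ ⇑τ = j := by
      funext m
      simp only [Function.comp_apply]
      rcases eq_or_ne m x with rfl | hmx
      · rw [hτ, Equiv.swap_apply_left]; exact hxy.symm
      · rcases eq_or_ne m y with rfl | hmy
        · rw [hτ, Equiv.swap_apply_right]; exact hxy
        · rw [hτ, Equiv.swap_apply_of_ne_of_ne hmx hmy]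
    apply Finset.sum_ninvolution (fun π => τ * π)
    · intro π
      have h1 : j ∘ ⇑(τ * π) = j ∘ ⇑π := by
        rw [Equiv.Perm.coe_mul, ← Function.comp_assoc, hjτ]
      have h2 : ((Equiv.Perm.sign (τ * π) : ℤ) : ℂ) = -((Equiv.Perm.sign π : ℤ) : ℂ) := by
        rw [Equiv.Perm.sign_mul, hτ, Equiv.Perm.sign_swap hne]
        push_cast
        ring
      rw [h1, h2]
      ring
    · intro π _ h
      have h1 : τ = 1 := mul_right_cancel (b := π) (by rw [one_mul]; exact h)
      rw [hτ] at h1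
      exact hne (Equiv.swap_eq_one_iff.mp h1)
    · intro π; exact Finset.mem_univ _
    · intro π
      rw [← mul_assoc, hτ, Equiv.swap_mul_self, one_mul]

lemma tensorPow_diag_apply (c : Fin d → ℂ) (j k : Fin n → Fin d) :
    tensorPowMat d n (diagonal c) j k = if k = j then ∏ i, c (j i) else 0 := by
  by_cases h : k = j
  · subst h
    simp [tensorPowMat, Matrix.diagonal_apply_eq]
  · rw [if_neg h]
    obtain ⟨i, hi⟩ := Function.ne_iff.mp h
    exact Finset.prod_eq_zero (Finset.mem_univ i)
      (by simp [tensorPowMat, Matrix.diagonal_apply_ne' _ hi])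

lemma trace_diagPow_mul_permSum (c : Fin d → ℂ) :
    (tensorPowMat d n (diagonal c) * permSum d n).trace
      = ∑ j : Fin n → Fin d,
          (if Function.Injective j then 1 else 0) * ∏ i, c (j i) := by
  rw [Matrix.trace]
  apply Finset.sum_congr rfl
  intro j _
  rw [Matrix.diag_apply, Matrix.mul_apply]
  rw [Finset.sum_eq_single j (by
    intro b _ hb
    rw [tensorPow_diag_apply, if_neg hb, zero_mul]) (by simp)]
  rw [tensorPow_diag_apply, if_pos rfl]
  rw [mul_comm]
  congr 1
  unfold permSum
  rw [Matrix.sum_apply]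
  rw [← sign_sum_stab d n j]
  apply Finset.sum_congr rfl
  intro π _
  simp [permMat]


lemma sandwich {m : Type*} [Fintype m] [DecidableEq m] (V X Y : Matrix m m ℂ)
    (hVV : Vᴴ * V = 1) : (V * X * Vᴴ) * (V * Y * Vᴴ) = V * (X * Y) * Vᴴ := by
  calc (V * X * Vᴴ) * (V * Y * Vᴴ) = V * (X * ((Vᴴ * V) * (Y * Vᴴ))) := by
        simp only [Matrix.mul_assoc]
    _ = V * (X * (Y * Vᴴ)) := by rw [hVV, Matrix.one_mul]
    _ = V * (X * Y) * Vᴴ := by simp only [Matrix.mul_assoc]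

open scoped MatrixOrder in
lemma traceNorm_eq_of_sq {m : Type*} [Fintype m] [DecidableEq m] (M W : Matrix m m ℂ)
    (hW : W.PosSemidef) (hsq : W ^ 2 = Mᴴ * M) : traceNorm M = W.trace.re := by
  have h0 : (0 : Matrix m m ℂ) ≤ Mᴴ * M := (Matrix.posSemidef_conjTranspose_mul_self M).nonneg
  have hW' : CFC.sqrt (Mᴴ * M) = W := CFC.sqrt_unique (by rw [← sq]; exact hsq) hW.nonneg
  rw [← hW', CFC.sqrt_eq_cfc, cfc_nnreal_eq_real _ _ h0,
    (Matrix.posSemidef_conjTranspose_mul_self M).1.cfc_eq, Matrix.IsHermitian.cfc,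
    Unitary.conjStarAlgAut_apply, traceNorm]
  congr 5
  funext i
  simp only [Function.comp_apply, Real.coe_sqrt, Real.coe_toNNReal']
  rcases le_total ((Matrix.posSemidef_conjTranspose_mul_self M).1.eigenvalues i) 0 with h | h
  · rw [max_eq_right h, Real.sqrt_zero, Real.sqrt_eq_zero'.mpr h]
    simp
  · rw [max_eq_left h]
    rfl

end Stmt10Aux

open Matrix Stmt10Aux in
/-- For a Hermitian operator `T` on a finite-dimensional Hilbert space, the trace norm of
`T^{⊗n} n! Aₙ` satisfies `‖T^{⊗n} n! Aₙ‖₁ ≤ ‖T‖₁^n`. -/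
theorem stmt10 (d n : ℕ) (T : Matrix (Fin d) (Fin d) ℂ) (hT : T.IsHermitian) :
    traceNorm (tensorPowMat d n T * ((Nat.factorial n : ℂ) • antisymMat d n))
      ≤ (traceNorm T) ^ n := by
  classical
  set V : Matrix (Fin d) (Fin d) ℂ := (Matrix.IsHermitian.eigenvectorUnitary hT :
    Matrix (Fin d) (Fin d) ℂ) with hVdef
  set lam : Fin d → ℝ := hT.eigenvalues with hlam
  set a : Fin d → ℝ := fun i => |lam i| with ha
  have ha0 : ∀ i, 0 ≤ a i := fun i => abs_nonneg _
  set D : Matrix (Fin d) (Fin d) ℂ := diagonal (fun i => (lam i : ℂ)) with hD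
  set Da : Matrix (Fin d) (Fin d) ℂ := diagonal (fun i => (a i : ℂ)) with hDa
  set Ds : Matrix (Fin d) (Fin d) ℂ := diagonal (fun i => ((Real.sqrt (a i)) : ℂ)) with hDs
  have hVV : Vᴴ * V = 1 := by
    rw [← Matrix.star_eq_conjTranspose]
    exact Matrix.mem_unitaryGroup_iff'.mp (Matrix.IsHermitian.eigenvectorUnitary hT).2
  have spectral : T = V * D * Vᴴ := by
    rw [← Matrix.star_eq_conjTranspose, hD]
    have := hT.spectral_theorem
    rw [Unitary.conjStarAlgAut_apply] at this
    exact this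
  have hDsDs : Ds * Ds = Da := by
    rw [hDs, hDa, Matrix.diagonal_mul_diagonal]
    exact congrArg _ (funext fun i => by
      rw [← Complex.ofReal_mul, Real.mul_self_sqrt (ha0 i)])
  have hDaDa : Da * Da = D * D := by
    rw [hDa, hD, Matrix.diagonal_mul_diagonal, Matrix.diagonal_mul_diagonal]
    exact congrArg _ (funext fun i => by
      rw [← Complex.ofReal_mul, ← Complex.ofReal_mul, ha]
      simp only []
      rw [abs_mul_abs_self])
  have hDaPSD : Da.PosSemidef := by
    rw [hDa]
    exact Matrix.posSemidef_diagonal_iff.mpr fun i => by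
      exact_mod_cast Complex.zero_le_real.mpr (ha0 i)
  have hDsH : Dsᴴ = Ds := by
    rw [hDs, Matrix.diagonal_conjTranspose]
    exact congrArg _ (funext fun i => by
      simp [Complex.star_def, Complex.conj_ofReal])
  -- trace norm of T
  have hQ : traceNorm T = (V * Da * Vᴴ).trace.re := by
    refine traceNorm_eq_of_sq T _ (hDaPSD.mul_mul_conjTranspose_same V) ?_
    rw [pow_two, hT.eq, spectral, sandwich V Da Da hVV, sandwich V D D hVV, hDaDa]
  have htrT : traceNorm T = ∑ i, a i := by
    rw [hQ, Matrix.trace_mul_cycle, hVV, Matrix.one_mul,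
      hDa, Matrix.trace_diagonal, Complex.re_sum]
    simp
  -- tensor level
  have hVnVn : (tensorPowMat d n V)ᴴ * tensorPowMat d n V = 1 := by
    rw [← tensorPow_conjTranspose, ← tensorPow_mul, hVV, tensorPow_one]
  have hEherm : (tensorPowMat d n Ds)ᴴ = tensorPowMat d n Ds := by
    rw [← tensorPow_conjTranspose, hDsH]
  have hTnH : (tensorPowMat d n T)ᴴ = tensorPowMat d n T := by
    rw [← tensorPow_conjTranspose, hT.eq]
  have hVnH : (tensorPowMat d n V)ᴴ = tensorPowMat d n Vᴴ :=
    (tensorPow_conjTranspose d n V).symm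
  have hPP : permSum d n * permSum d n = (n.factorial : ℂ) • permSum d n :=
    permSum_mul_self d n
  have hBHB : (tensorPowMat d n V * tensorPowMat d n Ds)ᴴ *
      (tensorPowMat d n V * tensorPowMat d n Ds) = tensorPowMat d n Da := by
    rw [Matrix.conjTranspose_mul, hEherm]
    calc tensorPowMat d n Ds * (tensorPowMat d n V)ᴴ *
          (tensorPowMat d n V * tensorPowMat d n Ds)
        = tensorPowMat d n Ds * ((tensorPowMat d n V)ᴴ * tensorPowMat d n V) *
            tensorPowMat d n Ds := by simp only [Matrix.mul_assoc]
      _ = tensorPowMat d n Ds * tensorPowMat d n Ds := by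
            rw [hVnVn, Matrix.mul_one]
      _ = tensorPowMat d n Da := by rw [← tensorPow_mul, hDsDs]
  have hBH : (tensorPowMat d n V * tensorPowMat d n Ds)ᴴ
      = tensorPowMat d n Ds * (tensorPowMat d n V)ᴴ := by
    rw [Matrix.conjTranspose_mul, hEherm]
  have hWpsd : ((tensorPowMat d n V * tensorPowMat d n Ds) * permSum d n *
      (tensorPowMat d n V * tensorPowMat d n Ds)ᴴ).PosSemidef :=
    (permSum_posSemidef d n).mul_mul_conjTranspose_same _
  have hPB : permSum d n * (tensorPowMat d n V * tensorPowMat d n Ds)ᴴ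
      = (tensorPowMat d n V * tensorPowMat d n Ds)ᴴ * permSum d n := by
    rw [hBH, hVnH]
    calc permSum d n * (tensorPowMat d n Ds * tensorPowMat d n Vᴴ)
        = (permSum d n * tensorPowMat d n Ds) * tensorPowMat d n Vᴴ := by
          rw [Matrix.mul_assoc]
      _ = (tensorPowMat d n Ds * permSum d n) * tensorPowMat d n Vᴴ := by
          rw [permSum_mul_tensorPow]
      _ = tensorPowMat d n Ds * (permSum d n * tensorPowMat d n Vᴴ) := by
          rw [Matrix.mul_assoc]
      _ = tensorPowMat d n Ds * (tensorPowMat d n Vᴴ * permSum d n) := by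
          rw [permSum_mul_tensorPow]
      _ = tensorPowMat d n Ds * tensorPowMat d n Vᴴ * permSum d n := by
          rw [Matrix.mul_assoc]
  have hBEEB : (tensorPowMat d n V * tensorPowMat d n Ds) * tensorPowMat d n Da *
      (tensorPowMat d n V * tensorPowMat d n Ds)ᴴ
      = tensorPowMat d n T * tensorPowMat d n T := by
    rw [hBH, hVnH]
    calc tensorPowMat d n V * tensorPowMat d n Ds * tensorPowMat d n Da *
          (tensorPowMat d n Ds * tensorPowMat d n Vᴴ)
        = tensorPowMat d n V * (tensorPowMat d n Ds * (tensorPowMat d n Da *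
            (tensorPowMat d n Ds * tensorPowMat d n Vᴴ))) := by
          simp only [Matrix.mul_assoc]
      _ = tensorPowMat d n (V * (Ds * (Da * (Ds * Vᴴ)))) := by
          rw [← tensorPow_mul, ← tensorPow_mul, ← tensorPow_mul, ← tensorPow_mul]
      _ = tensorPowMat d n (T * T) := by
          refine congrArg (tensorPowMat d n) ?_
          have hstep : Ds * (Da * Ds) = D * D := by
            rw [← hDaDa, ← hDsDs]
            simp only [Matrix.mul_assoc]
          calc V * (Ds * (Da * (Ds * Vᴴ))) = V * (Ds * (Da * Ds)) * Vᴴ := by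
                simp only [Matrix.mul_assoc]
            _ = V * (D * D) * Vᴴ := by rw [hstep]
            _ = T * T := by rw [spectral, sandwich V D D hVV]
      _ = tensorPowMat d n T * tensorPowMat d n T := by rw [tensorPow_mul]
  have hcommDa : permSum d n * tensorPowMat d n Da
      = tensorPowMat d n Da * permSum d n := permSum_mul_tensorPow d n Da
  have hcommT : permSum d n * tensorPowMat d n T
      = tensorPowMat d n T * permSum d n := permSum_mul_tensorPow d n T
  have hWsq : ((tensorPowMat d n V * tensorPowMat d n Ds) * permSum d n *
        (tensorPowMat d n V * tensorPowMat d n Ds)ᴴ) ^ 2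
      = (tensorPowMat d n T * permSum d n)ᴴ * (tensorPowMat d n T * permSum d n) := by
    have hMHM : (tensorPowMat d n T * permSum d n)ᴴ * (tensorPowMat d n T * permSum d n)
        = (n.factorial : ℂ) • (tensorPowMat d n T * tensorPowMat d n T * permSum d n) := by
      rw [Matrix.conjTranspose_mul, permSum_conjTranspose, hTnH]
      calc permSum d n * tensorPowMat d n T * (tensorPowMat d n T * permSum d n)
          = (permSum d n * tensorPowMat d n T) * tensorPowMat d n T * permSum d n := by
            simp only [Matrix.mul_assoc]
        _ = (tensorPowMat d n T * permSum d n) * tensorPowMat d n T * permSum d n := by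
            rw [hcommT]
        _ = tensorPowMat d n T * (permSum d n * tensorPowMat d n T) * permSum d n := by
            simp only [Matrix.mul_assoc]
        _ = tensorPowMat d n T * (tensorPowMat d n T * permSum d n) * permSum d n := by
            rw [hcommT]
        _ = tensorPowMat d n T * tensorPowMat d n T * (permSum d n * permSum d n) := by
            simp only [Matrix.mul_assoc]
        _ = (n.factorial : ℂ) • (tensorPowMat d n T * tensorPowMat d n T * permSum d n) := by
            rw [hPP, Matrix.mul_smul, Matrix.mul_assoc]
    rw [hMHM, pow_two]
    calc (tensorPowMat d n V * tensorPowMat d n Ds) * permSum d n *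
          (tensorPowMat d n V * tensorPowMat d n Ds)ᴴ *
          ((tensorPowMat d n V * tensorPowMat d n Ds) * permSum d n *
            (tensorPowMat d n V * tensorPowMat d n Ds)ᴴ)
        = (tensorPowMat d n V * tensorPowMat d n Ds) * permSum d n *
            ((tensorPowMat d n V * tensorPowMat d n Ds)ᴴ *
              (tensorPowMat d n V * tensorPowMat d n Ds)) *
            (permSum d n * (tensorPowMat d n V * tensorPowMat d n Ds)ᴴ) := by
          simp only [Matrix.mul_assoc]
      _ = (tensorPowMat d n V * tensorPowMat d n Ds) * permSum d n *
            tensorPowMat d n Da *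
            ((tensorPowMat d n V * tensorPowMat d n Ds)ᴴ * permSum d n) := by
          rw [hBHB, hPB]
      _ = (tensorPowMat d n V * tensorPowMat d n Ds) * (permSum d n *
            tensorPowMat d n Da) *
            ((tensorPowMat d n V * tensorPowMat d n Ds)ᴴ * permSum d n) := by
          simp only [Matrix.mul_assoc]
      _ = (tensorPowMat d n V * tensorPowMat d n Ds) * (tensorPowMat d n Da *
            permSum d n) *
            ((tensorPowMat d n V * tensorPowMat d n Ds)ᴴ * permSum d n) := by
          rw [hcommDa]
      _ = ((tensorPowMat d n V * tensorPowMat d n Ds) * tensorPowMat d n Da *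
            (tensorPowMat d n V * tensorPowMat d n Ds)ᴴ) *
            (permSum d n * permSum d n) := by
          simp only [Matrix.mul_assoc]
          rw [← Matrix.mul_assoc (permSum d n) _ (permSum d n), hPB]
          simp only [Matrix.mul_assoc]
      _ = (n.factorial : ℂ) • (tensorPowMat d n T * tensorPowMat d n T * permSum d n) := by
          rw [hBEEB, hPP, Matrix.mul_smul]
  have hsqrtM : traceNorm (tensorPowMat d n T * permSum d n)
      = ((tensorPowMat d n V * tensorPowMat d n Ds) * permSum d n *
        (tensorPowMat d n V * tensorPowMat d n Ds)ᴴ).trace.re :=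
    traceNorm_eq_of_sq _ _ hWpsd hWsq
  have htrW : ((tensorPowMat d n V * tensorPowMat d n Ds) * permSum d n *
        (tensorPowMat d n V * tensorPowMat d n Ds)ᴴ).trace
      = ∑ j : Fin n → Fin d,
          (if Function.Injective j then 1 else 0) * ∏ i, ((a (j i) : ℂ)) := by
    rw [Matrix.trace_mul_cycle, hBHB, hDa]
    exact trace_diagPow_mul_permSum d n _
  -- final assembly
  have hMeq : tensorPowMat d n T * ((Nat.factorial n : ℂ) • antisymMat d n)
      = tensorPowMat d n T * permSum d n := by
    rw [factorial_smul_antisym]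
  rw [hMeq, hsqrtM, htrW, htrT]
  rw [Complex.re_sum]
  have hre : ∀ j : Fin n → Fin d,
      (((if Function.Injective j then 1 else 0) : ℂ) * ∏ i, ((a (j i) : ℂ))).re
        = (if Function.Injective j then 1 else 0 : ℝ) * ∏ i, a (j i) := by
    intro j
    by_cases h : Function.Injective j
    · rw [if_pos h, if_pos h, one_mul, one_mul, ← Complex.ofReal_prod, Complex.ofReal_re]
    · rw [if_neg h, if_neg h, zero_mul, zero_mul, Complex.zero_re]
  rw [Finset.sum_congr rfl (fun j _ => hre j)]
  have hrhs : (∑ i, a i) ^ n = ∑ j : Fin n → Fin d, ∏ i, a (j i) := by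
    have h0 : (∑ i, a i) ^ n = ∏ _i : Fin n, (∑ k, a k) := by
      rw [Finset.prod_const, Finset.card_univ, Fintype.card_fin]
    rw [h0, Finset.prod_univ_sum]
    simp [Fintype.piFinset_univ]
  rw [hrhs]
  apply Finset.sum_le_sum
  intro j _
  by_cases h : Function.Injective j
  · rw [if_pos h, one_mul]
  · rw [if_neg h, zero_mul]
    exact Finset.prod_nonneg fun i _ => ha0 _
end
end
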